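/- Let h : ℕ → ℕ be monotonically increasing and satisfy condition (a), and let s ≥ 1 be a natural number such that i ⊕ s = i + s for every i with 0 ≤ i ≤ h(s). Then for all y, z ∈ ℕ with y ≤ h(z+s): y ⊕ (z+s) = mex({v ⊕ (z+s) : v < y} ∪ {0, 1, ..., s−1} ∪ {min(y, h(w)) ⊕ w : s ≤ w < z+s}); in particular, y ⊕ (z+s) ≥ s. -/

import Mathlib

/-- Condition (a): if `⌊z/2^i⌋ = ⌊z'/2^i⌋` for some `i ≥ 1`,
then `⌊h(z)/2^(i-1)⌋ = ⌊h(z')/2^(i-1)⌋`. -/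
def CondA (h : ℕ → ℕ) : Prop :=
  ∀ z z' i : ℕ, 1 ≤ i → z / 2 ^ i = z' / 2 ^ i →
    h z / 2 ^ (i - 1) = h z' / 2 ^ (i - 1)

/-- The minimum excluded value of a set of natural numbers. -/
noncomputable def mex (S : Set ℕ) : ℕ := sInf {n | n ∉ S}


private lemma xor_div_pow (a b m : ℕ) : (a ^^^ b) / 2^m = a / 2^m ^^^ b / 2^m := by
  simp only [← Nat.shiftRight_eq_div_pow]
  apply Nat.eq_of_testBit_eq
  intro i
  simp [Nat.testBit_shiftRight, Nat.testBit_xor]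

private lemma min_div_div (a b c : ℕ) : min a b / c = min (a/c) (b/c) := by
  rcases le_total a b with hab | hab
  · rw [min_eq_left hab, min_eq_left (Nat.div_le_div_right hab)]
  · rw [min_eq_right hab, min_eq_right (Nat.div_le_div_right hab)]

private lemma lt_of_div_lt {a b m : ℕ} (hlt : a / m < b / m) : a < b := by
  by_contra hc
  push_neg at hc
  exact absurd (Nat.div_le_div_right (c := m) hc) (by omega)

private lemma le_of_div_le {s x m : ℕ} (hm : s % m = 0) (hle : s / m ≤ x / m) : s ≤ x :=
  calc s = m * (s/m) := by have := Nat.div_add_mod s m; omega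
  _ ≤ m * (x/m) := Nat.mul_le_mul_left m hle
  _ = x/m * m := mul_comm _ _
  _ ≤ x := Nat.div_mul_le_self x m

private lemma div_succ_pow (a j : ℕ) : a / 2^(j+1) = a / 2^j / 2 := by
  rw [Nat.div_div_eq_div_mul, pow_succ]

private lemma top_bit {a b : ℕ} (hab : a < b) :
    ∃ j, a / 2^(j+1) = b / 2^(j+1) ∧ b / 2^j = a / 2^j + 1 ∧ a / 2^j % 2 = 0 := by
  set j := Nat.log2 (a ^^^ b) with hj
  have hne : a ^^^ b ≠ 0 := fun h0 => absurd (xor_eq_zero_iff.mp h0) (by omega)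
  have h1 : 2^j ≤ a ^^^ b := Nat.log2_self_le hne
  have h2 : a ^^^ b < 2^(j+1) := Nat.lt_log2_self
  have hd1 : (a ^^^ b) / 2^j = 1 := by
    apply Nat.div_eq_of_lt_le (by simpa using h1)
    rw [pow_succ] at h2; omega
  have hx : a/2^j ^^^ b/2^j = 1 := by rw [← xor_div_pow]; exact hd1
  have hagree : a/2^(j+1) = b/2^(j+1) := by
    have h0 : (a^^^b)/2^(j+1) = 0 := Nat.div_eq_of_lt h2
    rw [xor_div_pow] at h0
    exact xor_eq_zero_iff.mp h0
  have hpar : (1:ℕ) % 2 = (a/2^j + b/2^j) % 2 := by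
    conv_lhs => rw [← hx]
    exact Nat.xor_mod_two_eq
  have hle : a/2^j ≤ b/2^j := Nat.div_le_div_right (le_of_lt hab)
  have e1 : a/2^(j+1) = a/2^j/2 := div_succ_pow a j
  have e2 : b/2^(j+1) = b/2^j/2 := div_succ_pow b j
  exact ⟨j, hagree, by omega, by omega⟩

private lemma add_mul_div_pow {i m : ℕ} (him : i ≤ m) (c t : ℕ) :
    (2^m * c + t) / 2^i = 2^(m-i) * c + t / 2^i := by
  have e : (2:ℕ)^m * c = 2^i * (2^(m-i) * c) := by
    rw [← mul_assoc, ← pow_add]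
    congr 2
    omega
  rw [e, Nat.mul_add_div (pow_pos (by norm_num) _)]

private lemma fixed_point : ∀ (j : ℕ) (F : ℕ → ℕ),
    (∀ t, t < 2^j → F t < 2^j) →
    (∀ i t t', t < 2^j → t' < 2^j → t / 2^(i+1) = t' / 2^(i+1) → F t / 2^i = F t' / 2^i) →
    ∃ t, t < 2^j ∧ F t = t := by
  intro j
  induction j with
  | zero =>
    intro F hb _
    exact ⟨0, by norm_num, by have := hb 0 (by norm_num); omega⟩
  | succ j ih =>
    intro F hb hc
    have hpow : (0:ℕ) < 2^j := pow_pos (by norm_num) j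
    have hpow1 : (0:ℕ) < 2^(j+1) := pow_pos (by norm_num) _
    set c := F 0 / 2^j with hc0
    have hcall : ∀ t, t < 2^(j+1) → F t / 2^j = c := by
      intro t ht
      exact hc j t 0 ht hpow1 (by rw [Nat.div_eq_of_lt ht, Nat.div_eq_of_lt hpow1])
    have hdom : ∀ t, t < 2^j → 2^j * c + t < 2^(j+1) := by
      intro t ht
      have hc2 : c < 2 := by
        have hb0 := hb 0 hpow1
        rw [pow_succ] at hb0
        exact (Nat.div_lt_iff_lt_mul hpow).mpr (by omega)
      calc 2^j * c + t < 2^j * c + 2^j := by omega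
      _ = 2^j * (c+1) := by rw [Nat.mul_add, Nat.mul_one]
      _ ≤ 2^j * 2 := Nat.mul_le_mul_left _ (by omega)
      _ = 2^(j+1) := by rw [pow_succ]
    have hdivj : (2^j*c + 2^j)/2^j = c + 1 := by
      have := add_mul_div_pow (le_refl j) c (2^j)
      rw [Nat.sub_self, pow_zero, one_mul, Nat.div_self hpow] at this
      exact this
    set G := fun t => F (2^j * c + t) - 2^j * c with hG
    have hGrep : ∀ t, t < 2^j → F (2^j*c+t) = 2^j*c + G t ∧ G t < 2^j := by
      intro t ht
      have hd := hcall (2^j*c+t) (hdom t ht)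
      have hle : 2^j * c ≤ F (2^j*c+t) := by
        have h5 := Nat.div_mul_le_self (F (2^j*c+t)) (2^j)
        rw [hd, mul_comm] at h5
        exact h5
      have hlt : F (2^j*c+t) < 2^j*c + 2^j := lt_of_div_lt (by rw [hd, hdivj]; omega)
      exact ⟨by simp only [hG]; omega, by simp only [hG]; omega⟩
    have key : ∃ t, t < 2^j ∧ G t = t := by
      apply ih G (fun t ht => (hGrep t ht).2)
      intro i t t' ht ht' hagree
      rcases le_or_gt j i with hij | hij
      · have b1 := (hGrep t ht).2
        have b2 := (hGrep t' ht').2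
        have hpi : (2:ℕ)^j ≤ 2^i := Nat.pow_le_pow_right (by norm_num) hij
        rw [Nat.div_eq_of_lt (by omega), Nat.div_eq_of_lt (by omega)]
      · have hu : (2^j*c+t) / 2^(i+1) = (2^j*c+t') / 2^(i+1) := by
          rw [add_mul_div_pow (by omega : i+1 ≤ j), add_mul_div_pow (by omega : i+1 ≤ j), hagree]
        have hFd := hc i _ _ (hdom t ht) (hdom t' ht') hu
        rw [(hGrep t ht).1, (hGrep t' ht').1,
            add_mul_div_pow (by omega : i ≤ j), add_mul_div_pow (by omega : i ≤ j)] at hFd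
        omega
    obtain ⟨t, ht, hGt⟩ := key
    refine ⟨2^j*c + t, hdom t ht, ?_⟩
    rw [(hGrep t ht).1, hGt]
private lemma condA_step {h : ℕ → ℕ} (hA : CondA h) {w w' j : ℕ}
    (hww : w / 2^(j+1) = w' / 2^(j+1)) : h w / 2^j = h w' / 2^j := by
  have := hA w w' (j+1) (by omega) hww
  simpa using this

private lemma lt_of_div_eq_zero {a m : ℕ} (hm : 0 < m) (h0 : a / m = 0) : a < m := by
  rcases Nat.lt_or_ge a m with hlt | hge
  · exact hlt
  · exact absurd ((Nat.one_le_div_iff hm).mpr hge) (by omega)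
private lemma below_s {h : ℕ → ℕ} (hmono : Monotone h) {s k u w : ℕ}
    (hk3 : h s < 2^k) (hmod : s % 2^k = 0) (hu : u ≤ h w) (hws : w < s) :
    u ^^^ w < s := by
  have h1 : u ≤ h s := le_trans hu (hmono (le_of_lt hws))
  have hu0 : u / 2^k = 0 := Nat.div_eq_of_lt (by omega)
  have e : (u ^^^ w)/2^k = w/2^k := by rw [xor_div_pow, hu0, Nat.zero_xor]
  have hwk : w/2^k < s/2^k := by
    rcases Nat.lt_or_ge (w/2^k) (s/2^k) with hlt | hge
    · exact hlt
    · exact absurd (le_of_div_le hmod hge) (by omega)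
  exact lt_of_div_lt (show (u ^^^ w)/2^k < s/2^k by omega)

private lemma part2 {h : ℕ → ℕ} (hA : CondA h) {s k y N : ℕ}
    (hk3 : h s < 2^k) (hmod : s % 2^k = 0) (hsN : s ≤ N) (hy : y ≤ h N) :
    s ≤ y ^^^ N := by
  rcases eq_or_lt_of_le hsN with heq | hlt
  · have hy' : y < 2^k := by rw [← heq] at hy; omega
    have e : (y ^^^ N)/2^k = N/2^k := by
      rw [xor_div_pow, Nat.div_eq_of_lt hy', Nat.zero_xor]
    apply le_of_div_le hmod
    rw [e, ← heq]
  · obtain ⟨j, hag, hstep, hpar⟩ := top_bit hlt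
    rcases le_or_gt k j with hkj | hjk
    · have hs0 : h s / 2^j = 0 :=
        Nat.div_eq_of_lt (lt_of_lt_of_le hk3 (Nat.pow_le_pow_right (by norm_num) hkj))
    
      have hN0 : h N / 2^j = 0 := by rw [← condA_step hA hag]; exact hs0
      have hNlt : h N < 2^j := lt_of_div_eq_zero (pow_pos (by norm_num) _) hN0
      have hylt : y < 2^j := lt_of_le_of_lt hy hNlt
      have e : (y ^^^ N)/2^j = N/2^j := by
        rw [xor_div_pow, Nat.div_eq_of_lt hylt, Nat.zero_xor]
      exact le_of_lt (lt_of_div_lt (show s/2^j < (y^^^N)/2^j by omega))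
    · have hk1 : 1 ≤ k := by omega
      have hagk : s/2^k = N/2^k := by
        have e1 : s/2^k = s/2^(j+1)/2^(k-j-1) := by
          rw [Nat.div_div_eq_div_mul, ← pow_add]; congr 2; omega
        have e2 : N/2^k = N/2^(j+1)/2^(k-j-1) := by
          rw [Nat.div_div_eq_div_mul, ← pow_add]; congr 2; omega
        rw [e1, e2, hag]
      have hcd := hA s N k hk1 hagk
      have hpk : (0:ℕ) < 2^(k-1) := pow_pos (by norm_num) _
      have hkk : (2:ℕ)^k = 2^(k-1) * 2 := by rw [← pow_succ]; congr 1; omega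
      have hsk : h s / 2^(k-1) < 2 := (Nat.div_lt_iff_lt_mul hpk).mpr (by omega)
      have hNk : h N < 2^k := by
        have h6 : h N / 2^(k-1) < 2 := by omega
        have := (Nat.div_lt_iff_lt_mul hpk).mp h6
        omega
      have hylt : y < 2^k := lt_of_le_of_lt hy hNk
      have e : (y ^^^ N)/2^k = N/2^k := by
        rw [xor_div_pow, Nat.div_eq_of_lt hylt, Nat.zero_xor]
      apply le_of_div_le hmod
      rw [e, ← hagk]

private lemma notmem3 {h : ℕ → ℕ} (hA : CondA h) {y N w : ℕ}
    (hy : y ≤ h N) (hw : w < N) : min y (h w) ^^^ w ≠ y ^^^ N := by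
  intro e
  rcases le_total y (h w) with hmin | hmin
  · rw [min_eq_left hmin] at e
    have hwN : w = N := by
      have := congrArg (fun x => y ^^^ x) e
      simpa [xor_cancel_left] using this
    omega
  · rw [min_eq_right hmin] at e
    obtain ⟨j, hag, hstep, hpar⟩ := top_bit hw
    have hcd : h w/2^j = h N/2^j := condA_step hA hag
    have hye : y = h w ^^^ w ^^^ N := by
      rw [e, xor_cancel_right]
    have e1 : y/2^j = (h w/2^j ^^^ w/2^j) ^^^ N/2^j := by
      conv_lhs => rw [hye]
      rw [xor_div_pow, xor_div_pow]
    have p1 := Nat.xor_mod_two_eq (m := h w/2^j ^^^ w/2^j) (n := N/2^j)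
    have p2 := Nat.xor_mod_two_eq (m := h w/2^j) (n := w/2^j)
    have m1 : h w/2^j ≤ y/2^j := Nat.div_le_div_right hmin
    have m2 : y/2^j ≤ h N/2^j := Nat.div_le_div_right hy
    omega
private lemma mem3 {h : ℕ → ℕ} (hmono : Monotone h) (hA : CondA h) {s k y N n : ℕ}
    (hk3 : h s < 2^k) (hmod : s % 2^k = 0)
    (hy : y ≤ h N) (hns : s ≤ n) (hng : n < y ^^^ N) :
    (∃ v, v < y ∧ n = v ^^^ N) ∨ (∃ w, s ≤ w ∧ w < N ∧ n = min y (h w) ^^^ w) := by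
  obtain ⟨j, hag, hstep, hpar⟩ := top_bit hng
  have hpj : (0:ℕ) < 2^j := pow_pos (by norm_num) _
  have hyg : ∀ m : ℕ, y/2^m = (y^^^N)/2^m ^^^ N/2^m := by
    intro m
    conv_lhs => rw [(xor_cancel_right y N).symm]
    rw [xor_div_pow]
  by_cases hNp : N/2^j % 2 = 0
  · -- N even at bit j: first set
    refine Or.inl ⟨n ^^^ N, ?_, (xor_cancel_right n N).symm⟩
    have ev1 : (n^^^N)/2^(j+1) = y/2^(j+1) := by
      rw [xor_div_pow, hag, ← hyg]
    have ev2 : (n^^^N)/2^j = n/2^j ^^^ N/2^j := xor_div_pow _ _ _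
    have pv := Nat.xor_mod_two_eq (m := n/2^j) (n := N/2^j)
    have py := Nat.xor_mod_two_eq (m := (y^^^N)/2^j) (n := N/2^j)
    have eyj := hyg j
    have d1 : (n^^^N)/2^(j+1) = (n^^^N)/2^j/2 := div_succ_pow _ _
    have d2 : y/2^(j+1) = y/2^j/2 := div_succ_pow _ _
    exact lt_of_div_lt (show (n^^^N)/2^j < y/2^j by omega)
  · -- N odd at bit j
    have hNp1 : N/2^j % 2 = 1 := by omega
    have hyq : y/2^j ≤ h N/2^j := Nat.div_le_div_right hy
    have ypar : y/2^j % 2 = 0 := by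
      have eyj := hyg j
      have py := Nat.xor_mod_two_eq (m := (y^^^N)/2^j) (n := N/2^j)
      omega
    have dN : N/2^(j+1) = N/2^j/2 := div_succ_pow _ _
    rcases lt_or_eq_of_le hyq with hlt | heq
    · -- y/2^j < q : take w = n ^^^ y, min = y
      have ew1 : (n ^^^ y)/2^(j+1) = N/2^(j+1) := by
        rw [xor_div_pow, hag, hyg (j+1), xor_cancel_left]
      have ew2 : (n ^^^ y)/2^j = n/2^j ^^^ y/2^j := xor_div_pow _ _ _
      have pw := Nat.xor_mod_two_eq (m := n/2^j) (n := y/2^j)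
      have hwN : (n ^^^ y) < N := by
        have d1 : (n^^^y)/2^(j+1) = (n^^^y)/2^j/2 := div_succ_pow _ _
        exact lt_of_div_lt (show (n^^^y)/2^j < N/2^j by omega)
      have hhw : h (n ^^^ y)/2^j = h N/2^j := condA_step hA ew1
      have hyhw : y ≤ h (n ^^^ y) := by
        have l1 : y < (h N/2^j) * 2^j := (Nat.div_lt_iff_lt_mul hpj).mp hlt
        have l2 : (h N/2^j) * 2^j ≤ h (n ^^^ y) := by
          have l3 := Nat.div_mul_le_self (h (n ^^^ y)) (2^j)
          rw [hhw] at l3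
          exact l3
        omega
      have hn_eq : y ^^^ (n ^^^ y) = n := by
        rw [Nat.xor_comm n y, xor_cancel_left]
      have hws : s ≤ n ^^^ y := by
        by_contra hc
        push_neg at hc
        have := below_s hmono hk3 hmod hyhw hc
        rw [hn_eq] at this
        omega
      exact Or.inr ⟨n ^^^ y, hws, hwN, by rw [min_eq_left hyhw, hn_eq]⟩
    · -- y/2^j = q : fixed point construction
      set q := h N / 2^j with hq
      have hdivq : (2^j*q + 2^j)/2^j = q + 1 := by
        have := add_mul_div_pow (le_refl j) q (2^j)
        rw [Nat.sub_self, pow_zero, one_mul, Nat.div_self hpj] at this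
        exact this
      -- basic facts for each t < 2^j
      have hprep : ∀ t, t < 2^j →
          (n ^^^ (2^j*q + t))/2^(j+1) = N/2^(j+1) ∧
          2^j*q ≤ min y (h (n ^^^ (2^j*q + t))) ∧
          min y (h (n ^^^ (2^j*q + t))) < 2^j*q + 2^j := by
        intro t ht
        have hu1 : (2^j*q + t)/2^j = q := by
          have := add_mul_div_pow (le_refl j) q t
          rw [Nat.sub_self, pow_zero, one_mul, Nat.div_eq_of_lt ht, add_zero] at this
          exact this
        have hu2 : (2^j*q + t)/2^(j+1) = y/2^(j+1) := by
          rw [div_succ_pow, hu1, div_succ_pow y j, heq]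
        have hw1 : (n ^^^ (2^j*q + t))/2^(j+1) = N/2^(j+1) := by
          rw [xor_div_pow, hag, hu2, hyg (j+1), xor_cancel_left]
        have hhw : h (n ^^^ (2^j*q + t))/2^j = q := condA_step hA hw1
        have hmind : min y (h (n ^^^ (2^j*q + t)))/2^j = q := by
          rw [min_div_div, hhw, ← heq, min_self]
        have hle : 2^j*q ≤ min y (h (n ^^^ (2^j*q + t))) := by
          have l3 := Nat.div_mul_le_self (min y (h (n ^^^ (2^j*q + t)))) (2^j)
          rw [hmind, mul_comm] at l3
          exact l3
        have hlt2 : min y (h (n ^^^ (2^j*q + t))) < 2^j*q + 2^j :=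
          lt_of_div_lt (show _ / 2^j < (2^j*q + 2^j)/2^j by rw [hmind, hdivq]; omega)
        exact ⟨hw1, hle, hlt2⟩
      obtain ⟨t, ht, hFt⟩ := fixed_point j (fun t => min y (h (n ^^^ (2^j*q + t))) - 2^j*q)
        (fun t ht => by
          show min y (h (n ^^^ (2^j*q + t))) - 2^j*q < 2^j
          have := (hprep t ht).2
          omega)
        (by
          intro i t t' ht ht' hee
          show (min y (h (n ^^^ (2^j*q + t))) - 2^j*q) / 2^i
              = (min y (h (n ^^^ (2^j*q + t'))) - 2^j*q) / 2^i
          rcases le_or_gt j i with hij | hij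
          · have b1 := (hprep t ht).2
            have b2 := (hprep t' ht').2
            have hpi : (2:ℕ)^j ≤ 2^i := Nat.pow_le_pow_right (by norm_num) hij
            rw [Nat.div_eq_of_lt (by omega), Nat.div_eq_of_lt (by omega)]
          · have hu : (2^j*q+t) / 2^(i+1) = (2^j*q+t') / 2^(i+1) := by
              rw [add_mul_div_pow (by omega : i+1 ≤ j), add_mul_div_pow (by omega : i+1 ≤ j), hee]
            have hx : (n ^^^ (2^j*q+t))/2^(i+1) = (n ^^^ (2^j*q+t'))/2^(i+1) := by
              rw [xor_div_pow, xor_div_pow, hu]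
            have hcd := condA_step hA hx
            have hmm : min y (h (n ^^^ (2^j*q+t)))/2^i = min y (h (n ^^^ (2^j*q+t')))/2^i := by
              rw [min_div_div, min_div_div, hcd]
            have r1 := (hprep t ht).2
            have r2 := (hprep t' ht').2
            have c1 : min y (h (n ^^^ (2^j*q+t))) =
                2^j*q + (min y (h (n ^^^ (2^j*q+t))) - 2^j*q) := by omega
            have c2 : min y (h (n ^^^ (2^j*q+t'))) =
                2^j*q + (min y (h (n ^^^ (2^j*q+t'))) - 2^j*q) := by omega
            rw [c1, c2, add_mul_div_pow (by omega : i ≤ j), add_mul_div_pow (by omega : i ≤ j)] at hmm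
            omega)
      have hFt' : min y (h (n ^^^ (2^j*q + t))) - 2^j*q = t := hFt
      have hrep := (hprep t ht).2
      have hmin_u : min y (h (n ^^^ (2^j*q + t))) = 2^j*q + t := by omega
      have hn_eq : (2^j*q + t) ^^^ (n ^^^ (2^j*q + t)) = n := by
        rw [Nat.xor_comm n (2^j*q + t), xor_cancel_left]
      have hu1 : (2^j*q + t)/2^j = q := by
        have := add_mul_div_pow (le_refl j) q t
        rw [Nat.sub_self, pow_zero, one_mul, Nat.div_eq_of_lt ht, add_zero] at this
        exact this
      have hwN : (n ^^^ (2^j*q + t)) < N := by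
        have ew2 : (n ^^^ (2^j*q + t))/2^j = n/2^j ^^^ (2^j*q + t)/2^j := xor_div_pow _ _ _
        have pw := Nat.xor_mod_two_eq (m := n/2^j) (n := (2^j*q + t)/2^j)
        have d1 : (n ^^^ (2^j*q + t))/2^(j+1) = (n ^^^ (2^j*q + t))/2^j/2 := div_succ_pow _ _
        have hw1 := (hprep t ht).1
        exact lt_of_div_lt (show (n ^^^ (2^j*q + t))/2^j < N/2^j by omega)
      have hws : s ≤ n ^^^ (2^j*q + t) := by
        by_contra hc
        push_neg at hc
        have hble := below_s hmono hk3 hmod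
          (min_le_right y (h (n ^^^ (2^j*q + t)))) hc
        rw [hmin_u, hn_eq] at hble
        omega
      exact Or.inr ⟨n ^^^ (2^j*q + t), hws, hwN, by rw [hmin_u, hn_eq]⟩

theorem stmt_15 (h : ℕ → ℕ) (hmono : Monotone h) (hA : CondA h)
    (s : ℕ) (hs : 1 ≤ s) (hxor : ∀ i ≤ h s, i ^^^ s = i + s)
    (y z : ℕ) (hyz : y ≤ h (z + s)) :
    y ^^^ (z + s) =
      mex ({x | ∃ v < y, x = v ^^^ (z + s)} ∪ Set.Iio s ∪
           {x | ∃ w, s ≤ w ∧ w < z + s ∧ x = min y (h w) ^^^ w}) ∧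
    s ≤ y ^^^ (z + s) := by
  have hs0 : s ≠ 0 := by omega
  set k := padicValNat 2 s with hk
  have hk1 : 2^k ∣ s := pow_padicValNat_dvd
  have hk2 : ¬ 2^(k+1) ∣ s := pow_succ_padicValNat_not_dvd hs0
  have hpk : (0:ℕ) < 2^k := pow_pos (by norm_num) _
  have hmod : s % 2^k = 0 := by
    obtain ⟨m, hm⟩ := hk1
    rw [hm]
    exact Nat.mul_mod_right _ _
  have hms : 2^k * (s/2^k) = s := Nat.mul_div_cancel' hk1
  have hodd : (s / 2^k) % 2 = 1 := by
    by_contra hpar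
    have hpar0 : (s / 2^k) % 2 = 0 := by omega
    exact hk2 ⟨s/2^k/2, by
      rw [pow_succ, mul_assoc]
      conv_lhs => rw [← hms]
      congr 1
      omega⟩
  have hk3 : h s < 2^k := by
    by_contra hc
    push_neg at hc
    have e := hxor (2^k) hc
    have d1 : (2^k ^^^ s)/2^k = 1 ^^^ (s/2^k) := by
      rw [xor_div_pow, Nat.div_self hpk]
    have e2 : 2^k + s = 2^k*(s/2^k) + 2^k := by omega
    have d2 : (2^k*(s/2^k) + 2^k)/2^k = s/2^k + 1 := by
      have := add_mul_div_pow (le_refl k) (s/2^k) (2^k)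
      rw [Nat.sub_self, pow_zero, one_mul, Nat.div_self hpk] at this
      exact this
    have e3 : 1 ^^^ (s/2^k) = s/2^k + 1 := by
      rw [← d1, e, e2, d2]
    have d3 : (1 ^^^ (s/2^k))/2 = s/2^k/2 := by
      have := xor_div_pow 1 (s/2^k) 1
      rw [pow_one] at this
      rw [this]
      norm_num
    rw [e3] at d3
    omega
  have hsN : s ≤ z + s := by omega
  have hg_ge : s ≤ y ^^^ (z + s) := part2 hA hk3 hmod hsN hyz
  refine ⟨?_, hg_ge⟩
  have hnotin : (y ^^^ (z+s)) ∉ ({x | ∃ v < y, x = v ^^^ (z + s)} ∪ Set.Iio s ∪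
      {x | ∃ w, s ≤ w ∧ w < z + s ∧ x = min y (h w) ^^^ w}) := by
    intro hmem
    simp only [Set.mem_union, Set.mem_setOf_eq, Set.mem_Iio] at hmem
    rcases hmem with (⟨v, hv, he⟩ | hlt) | ⟨w, hw1, hw2, he⟩
    · have hyv : y = v := by
        have := congrArg (fun x => x ^^^ (z+s)) he
        simpa [xor_cancel_right] using this
      omega
    · omega
    · exact notmem3 hA hyz hw2 he.symm
  have hnotin' : (y ^^^ (z+s)) ∈ {n : ℕ | n ∉ ({x | ∃ v < y, x = v ^^^ (z + s)} ∪ Set.Iio s ∪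
      {x | ∃ w, s ≤ w ∧ w < z + s ∧ x = min y (h w) ^^^ w})} := hnotin
  unfold mex
  apply le_antisymm
  · apply le_csInf ⟨_, hnotin'⟩
    intro b hb
    by_contra hc
    push_neg at hc
    have hbT : b ∈ ({x | ∃ v < y, x = v ^^^ (z + s)} ∪ Set.Iio s ∪
        {x | ∃ w, s ≤ w ∧ w < z + s ∧ x = min y (h w) ^^^ w}) := by
      simp only [Set.mem_union, Set.mem_setOf_eq, Set.mem_Iio]
      rcases Nat.lt_or_ge b s with hbs | hbs
      · exact Or.inl (Or.inr hbs)
      · rcases mem3 hmono hA hk3 hmod hyz hbs hc with ⟨v, hv, he⟩ | ⟨w, h1, h2, he⟩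
        · exact Or.inl (Or.inl ⟨v, hv, he⟩)
        · exact Or.inr ⟨w, h1, h2, he⟩
    exact (Set.mem_setOf_eq ▸ hb) hbT
  · exact Nat.sInf_le hnotin'
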